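/- Consider the integer program max{c^T x : Ax = b, l ≤ x ≤ u, x ∈ ℤ^n} with A ∈ ℤ^{m×n}, b ∈ ℤ^m, c ∈ ℤ^n and bounds l, u ∈ (ℤ ∪ {−∞, +∞})^n. Let z₀ be a feasible solution and z* a feasible solution with c^T z* > c^T z₀. Then there exist an element g of the Graver basis of A and a positive integer λ that is a power of two (λ = 2^i for some integer i ≥ 0) such that z₀ + λg is feasible and λ · c^T g ≥ c^T(z* − z₀) / (4n). -/

import Mathlib

/-- Two integer vectors are sign-compatible if they agree in sign componentwise. -/
def SignCompat {ι : Type*} (u v : ι → ℤ) : Prop := ∀ i, 0 ≤ u i * v i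

/-- A cycle of an integer matrix `A` is an integer vector in its kernel. -/
def IsCycle {R C : Type*} [Fintype C] (A : Matrix R C ℤ) (y : C → ℤ) : Prop :=
  A.mulVec y = 0

/-- The Graver basis of `A` consists of the nonzero cycles of `A` that cannot be
written as the sum of two sign-compatible nonzero cycles of `A`. -/
def InGraverBasis {R C : Type*} [Fintype C] (A : Matrix R C ℤ) (y : C → ℤ) : Prop :=
  IsCycle A y ∧ y ≠ 0 ∧
    ¬ ∃ u v : C → ℤ, IsCycle A u ∧ IsCycle A v ∧ u ≠ 0 ∧ v ≠ 0 ∧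
      SignCompat u v ∧ y = u + v

/-- The extended integers `ℤ ∪ {−∞, +∞}`, used for lower and upper bounds. -/
abbrev ZInf := WithBot (WithTop ℤ)

/-- The canonical embedding of `ℤ` into `ℤ ∪ {−∞, +∞}`. -/
def zc (x : ℤ) : ZInf := ((x : WithTop ℤ) : ZInf)

/-- A point `x ∈ ℤ^n` is feasible if `Ax = b` and `l ≤ x ≤ u` componentwise. -/
def IsFeasible {m n : ℕ} (A : Matrix (Fin m) (Fin n) ℤ) (b : Fin m → ℤ)
    (l u : Fin n → ZInf) (x : Fin n → ℤ) : Prop :=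
  A.mulVec x = b ∧ ∀ j, l j ≤ zc (x j) ∧ zc (x j) ≤ u j

namespace GraverAux


/-- `g` is conformal to `y`: componentwise same sign and no larger in absolute value. -/
def Conf {n : ℕ} (y g : Fin n → ℤ) : Prop := ∀ i, 0 ≤ g i * y i ∧ |g i| ≤ |y i|

lemma conf_self {n : ℕ} (y : Fin n → ℤ) : Conf y y := fun i => ⟨mul_self_nonneg _, le_rfl⟩

lemma conf_trans {n : ℕ} {y u g : Fin n → ℤ} (h1 : Conf y u) (h2 : Conf u g) : Conf y g := by
  intro i
  obtain ⟨a1, b1⟩ := h1 i; obtain ⟨a2, b2⟩ := h2 i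
  rcases eq_or_ne (u i) 0 with h | h
  · have hg : g i = 0 := by
      have : |g i| ≤ 0 := by simpa [h] using b2
      exact abs_eq_zero.mp (le_antisymm this (abs_nonneg _))
    simp [hg]
  · have hu2 : 0 < u i * u i := mul_self_pos.mpr h
    constructor
    · have h3 : 0 ≤ (u i * u i) * (g i * y i) := by nlinarith
      exact nonneg_of_mul_nonneg_right h3 hu2
    · exact b2.trans b1

lemma abs_add_of_sc {a b : ℤ} (h : 0 ≤ a * b) : |a + b| = |a| + |b| := by
  rcases le_or_gt 0 a with ha | ha <;> rcases le_or_gt 0 b with hb | hb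
  · rw [abs_of_nonneg ha, abs_of_nonneg hb, abs_of_nonneg (by linarith)]
  · have hb0 : a = 0 := by nlinarith
    simp [hb0]
  · have ha0 : b = 0 := by nlinarith
    simp [ha0]
  · rw [abs_of_nonpos ha.le, abs_of_nonpos hb.le, abs_of_nonpos (by linarith)]; ring

/-- `y - p` is conformal to `y` whenever `p` is. -/
lemma conf_sub {n : ℕ} {y p : Fin n → ℤ} (h : Conf y p) : Conf y (fun i => y i - p i) := by
  intro i
  obtain ⟨a, b⟩ := h i
  dsimp only
  rcases le_or_gt 0 (y i) with hy | hy
  · have hp0 : 0 ≤ p i := by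
      rcases eq_or_ne (y i) 0 with h0 | h0
      · have : |p i| ≤ 0 := by simpa [h0] using b
        simp [abs_eq_zero.mp (le_antisymm this (abs_nonneg _))]
      · nlinarith [lt_of_le_of_ne hy (Ne.symm h0)]
    have hple : p i ≤ y i := by rw [abs_of_nonneg hp0, abs_of_nonneg hy] at b; exact b
    constructor
    · nlinarith
    · rw [abs_of_nonneg (by linarith), abs_of_nonneg hy]; linarith
  · have hp0 : p i ≤ 0 := by nlinarith
    have hple : y i ≤ p i := by rw [abs_of_nonpos hp0, abs_of_nonpos hy.le] at b; linarith
    constructor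
    · nlinarith
    · rw [abs_of_nonpos (by linarith), abs_of_nonpos hy.le]; linarith

lemma aligned_term_bound {α : Type*} [CommRing α] [LinearOrder α] [IsStrictOrderedRing α] {ι : Type*} (s : Finset ι)
    (t : ι → α) (w : α) (hsign : ∀ j ∈ s, 0 ≤ t j * w) (hsum : ∑ j ∈ s, t j = w)
    {j : ι} (hj : j ∈ s) (h0 : w = 0 → t j = 0) : 0 ≤ t j * w ∧ |t j| ≤ |w| := by
  refine ⟨hsign j hj, ?_⟩
  rcases lt_trichotomy w 0 with h | h | h
  · have hnp : ∀ k ∈ s, t k ≤ 0 := fun k hk => by nlinarith [hsign k hk]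
    have h1 : -t j ≤ ∑ k ∈ s, -t k :=
      Finset.single_le_sum (f := fun k => -t k) (fun k hk => neg_nonneg.mpr (hnp k hk)) hj
    have h2 : ∑ k ∈ s, -t k = -w := by rw [← hsum]; exact Finset.sum_neg_distrib (f := t)
    rw [h2] at h1
    rw [abs_of_nonpos (hnp j hj), abs_of_neg h]; linarith
  · simp [h0 h, h]
  · have hnn : ∀ k ∈ s, 0 ≤ t k := fun k hk => by nlinarith [hsign k hk]
    have := Finset.single_le_sum hnn hj
    rw [hsum] at this
    rw [abs_of_nonneg (hnn j hj), abs_of_pos h]; linarith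



lemma pos_norm {n : ℕ} {y : Fin n → ℤ} (hy : y ≠ 0) : 1 ≤ ∑ i, (y i).natAbs := by
  obtain ⟨i, hi⟩ := Function.ne_iff.mp hy
  have h1 : 1 ≤ (y i).natAbs := by
    simp only [Pi.zero_apply] at hi; omega
  exact h1.trans (Finset.single_le_sum (f := fun i => (y i).natAbs) (fun _ _ => Nat.zero_le _) (Finset.mem_univ i))

lemma exists_decomp {R : Type*} [Fintype R] {n : ℕ} (A : Matrix R (Fin n) ℤ) :
    ∀ (N : ℕ) (y : Fin n → ℤ), (∑ i, (y i).natAbs) ≤ N → IsCycle A y → y ≠ 0 →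
      ∃ L : List (Fin n → ℤ), L ≠ [] ∧ (∀ g ∈ L, InGraverBasis A g ∧ Conf y g) ∧ L.sum = y := by
  intro N
  induction N with
  | zero =>
    intro y hN _ hy
    exact absurd (pos_norm hy) (by omega)
  | succ N ih =>
    intro y hN hcyc hy
    by_cases hG : InGraverBasis A y
    · exact ⟨[y], by simp, by simp [hG, conf_self], by simp⟩
    · have hE : ∃ u v : Fin n → ℤ, IsCycle A u ∧ IsCycle A v ∧ u ≠ 0 ∧ v ≠ 0 ∧
          SignCompat u v ∧ y = u + v := by
        by_contra hE; exact hG ⟨hcyc, hy, hE⟩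
      obtain ⟨u, v, hcu, hcv, hu0, hv0, hsc, huv⟩ := hE
      have habs : ∀ i, (y i).natAbs = (u i).natAbs + (v i).natAbs := by
        intro i
        have h1 : |y i| = |u i| + |v i| := by
          rw [huv, Pi.add_apply]; exact abs_add_of_sc (hsc i)
        rw [Int.abs_eq_natAbs, Int.abs_eq_natAbs, Int.abs_eq_natAbs] at h1
        exact_mod_cast h1
      have hsum : ∑ i, (y i).natAbs = (∑ i, (u i).natAbs) + ∑ i, (v i).natAbs := by
        rw [← Finset.sum_add_distrib]; exact Finset.sum_congr rfl (fun i _ => habs i)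
      have hu1 := pos_norm hu0
      have hv1 := pos_norm hv0
      have hconfu : Conf y u := by
        intro i
        refine ⟨by rw [huv, Pi.add_apply]; nlinarith [hsc i, sq_nonneg (u i)], ?_⟩
        rw [huv, Pi.add_apply, abs_add_of_sc (hsc i)]; linarith [abs_nonneg (v i)]
      have hconfv : Conf y v := by
        intro i
        refine ⟨by rw [huv, Pi.add_apply]; nlinarith [hsc i, sq_nonneg (v i)], ?_⟩
        rw [huv, Pi.add_apply, abs_add_of_sc (hsc i)]; linarith [abs_nonneg (u i)]
      obtain ⟨Lu, -, hLu, hLusum⟩ := ih u (by omega) hcu hu0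
      obtain ⟨Lv, -, hLv, hLvsum⟩ := ih v (by omega) hcv hv0
      refine ⟨Lu ++ Lv, by simp [List.append_eq_nil_iff]; rintro rfl; exact absurd hLusum.symm hu0 , ?_, ?_⟩
      · intro g hg
        rcases List.mem_append.mp hg with h | h
        · exact ⟨(hLu g h).1, conf_trans hconfu (hLu g h).2⟩
        · exact ⟨(hLv g h).1, conf_trans hconfv (hLv g h).2⟩
      · rw [List.sum_append, hLusum, hLvsum, huv]

lemma conf_finite {n : ℕ} (y : Fin n → ℤ) : {g : Fin n → ℤ | Conf y g}.Finite := by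
  apply Set.Finite.subset (Set.finite_Icc (fun i => -|y i|) (fun i => |y i|))
  intro g hg
  rw [Set.mem_Icc]
  constructor <;> intro i
  · exact (abs_le.mp (hg i).2).1
  · exact (abs_le.mp (hg i).2).2


lemma count_decomp {n : ℕ} (Gs : Finset (Fin n → ℤ)) (M : Multiset (Fin n → ℤ))
    (hM : ∀ g ∈ M, g ∈ Gs) :
    ∀ i, ∑ j : {g // g ∈ Gs}, (M.count j.1 : ℤ) * j.1 i = M.sum i := by
  classical
  have h1 : M.sum = ∑ g ∈ M.toFinset, M.count g • g := by
    have := Finset.sum_multiset_map_count M id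
    simpa using this
  have h2 : ∑ g ∈ M.toFinset, M.count g • g = ∑ g ∈ Gs, M.count g • g := by
    apply Finset.sum_subset
    · intro g hg; exact hM g (Multiset.mem_toFinset.mp hg)
    · intro g _ hg
      rw [Multiset.count_eq_zero_of_notMem (fun hmem => hg (Multiset.mem_toFinset.mpr hmem))]
      simp
  intro i
  rw [Finset.sum_coe_sort Gs (fun g => (M.count g : ℤ) * g i), h1, h2, Finset.sum_apply]
  apply Finset.sum_congr rfl
  intro g _
  simp [nsmul_eq_mul]


lemma zc_mono {a b : ℤ} (h : a ≤ b) : zc a ≤ zc b := by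
  unfold zc
  exact_mod_cast h

/-- scaled step stays between 0 and w -/
lemma step_between {a w : ℤ} {b lam : ℕ} (hsign : 0 ≤ ((b:ℤ) * a) * w)
    (habs : |(b:ℤ) * a| ≤ |w|) (hb : 1 ≤ b) (hlam : 1 ≤ lam) (hlamb : lam ≤ b)
    (h0 : w = 0 → a = 0) :
    (0 ≤ (lam:ℤ) * a ∧ (lam:ℤ) * a ≤ w) ∨ (w ≤ (lam:ℤ) * a ∧ (lam:ℤ) * a ≤ 0) := by
  have hbp : (0:ℤ) < (b:ℤ) := by exact_mod_cast hb
  have hlp : (0:ℤ) < (lam:ℤ) := by exact_mod_cast hlam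
  have hlb : (lam:ℤ) ≤ (b:ℤ) := by exact_mod_cast hlamb
  rcases lt_trichotomy w 0 with hw | hw | hw
  · right
    have ha : a ≤ 0 := by
      by_contra hc
      push_neg at hc
      have := mul_pos hbp hc
      nlinarith
    have h1 : w ≤ (b:ℤ) * a := by
      rw [abs_of_nonpos (by nlinarith), abs_of_neg hw] at habs; linarith
    constructor
    · nlinarith
    · nlinarith
  · left
    rw [h0 hw, mul_zero]
    simp [hw]
  · left
    have ha : 0 ≤ a := by
      by_contra hc
      push_neg at hc
      have := mul_pos hbp (neg_pos.mpr hc)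
      nlinarith
    have h1 : (b:ℤ) * a ≤ w := by
      rw [abs_of_nonneg (by nlinarith), abs_of_pos hw] at habs; linarith
    constructor
    · nlinarith
    · nlinarith


set_option maxHeartbeats 1000000 in
lemma key {m' n : ℕ} (A : Matrix (Fin m') (Fin n) ℤ) (y : Fin n → ℤ)
    (hcyc : IsCycle A y) (hy : y ≠ 0) :
    ∃ (k : ℕ) (G : Fin k → (Fin n → ℤ)) (D : Fin k → ℕ), k ≤ 2 * n ∧
      (∀ t, InGraverBasis A (G t) ∧ Conf y (G t) ∧ 1 ≤ D t) ∧
      (∀ i, ∑ t, (D t : ℤ) * G t i = y i) := by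
  classical
  obtain ⟨L₀, hL₀ne, hL₀mem, hL₀sum⟩ := exists_decomp A _ y le_rfl hcyc hy
  have hfin : {g : Fin n → ℤ | InGraverBasis A g ∧ Conf y g}.Finite :=
    (conf_finite y).subset (fun g hg => hg.2)
  set Gs : Finset (Fin n → ℤ) := hfin.toFinset with hGs
  have hmem : ∀ g, g ∈ Gs ↔ InGraverBasis A g ∧ Conf y g := by
    intro g; simp [hGs, Set.Finite.mem_toFinset]
  -- basic facts about members
  have hgconf : ∀ j : {g // g ∈ Gs}, Conf y j.1 := fun j => ((hmem j.1).mp j.2).2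
  have hggrav : ∀ j : {g // g ∈ Gs}, InGraverBasis A j.1 := fun j => ((hmem j.1).mp j.2).1
  have hgzero : ∀ (j : {g // g ∈ Gs}) i, y i = 0 → j.1 i = 0 := by
    intro j i h0
    have := (hgconf j i).2
    rw [h0] at this; simpa using abs_eq_zero.mp (le_antisymm (by simpa using this) (abs_nonneg _))
  -- the polytope
  set K : Set ({g // g ∈ Gs} → ℝ) :=
    {α | (∀ j, 0 ≤ α j) ∧ ∀ i, (∑ j, α j * ((j.1 i : ℤ) : ℝ)) = (y i : ℝ)} with hK
  -- K is nonempty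
  have hsub0 : ∀ g ∈ (↑L₀ : Multiset (Fin n → ℤ)), g ∈ Gs := by
    intro g hg
    exact (hmem g).mpr (hL₀mem g (by simpa using hg))
  have hKne : K.Nonempty := by
    refine ⟨fun j => ((↑L₀ : Multiset (Fin n → ℤ)).count j.1 : ℝ), fun j => by positivity, ?_⟩
    intro i
    have hz := count_decomp Gs (↑L₀ : Multiset (Fin n → ℤ)) hsub0 i
    have hs : (↑L₀ : Multiset (Fin n → ℤ)).sum = y := by simpa using hL₀sum
    rw [hs] at hz
    calc ∑ j : {g // g ∈ Gs}, ((↑L₀ : Multiset (Fin n → ℤ)).count j.1 : ℝ) * ((j.1 i : ℤ) : ℝ)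
        = ((∑ j : {g // g ∈ Gs}, ((↑L₀ : Multiset (Fin n → ℤ)).count j.1 : ℤ) * j.1 i : ℤ) : ℝ) := by
          push_cast; ring
      _ = ((y i : ℤ) : ℝ) := by rw [hz]
  -- bounds
  set R : ℝ := ∑ i, (|y i| : ℝ) with hR
  have hR0 : 0 ≤ R := by positivity
  have hbd : ∀ α ∈ K, ∀ j, α j ≤ R := by
    intro α hα j
    obtain ⟨i0, hi0⟩ := Function.ne_iff.mp (hggrav j).2.1
    have hynz : y i0 ≠ 0 := by
      intro h0; exact hi0 (by simpa using hgzero j i0 h0)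
    have hi0' : j.1 i0 ≠ 0 := by simpa using hi0
    have halign := aligned_term_bound (Finset.univ) (fun j' => α j' * ((j'.1 i0 : ℤ) : ℝ))
      ((y i0 : ℤ) : ℝ)
      (fun j' _ => by
        have h1 := (hgconf j' i0).1
        have : (0:ℝ) ≤ ((j'.1 i0 * y i0 : ℤ) : ℝ) := by exact_mod_cast h1
        push_cast at this
        calc (0:ℝ) ≤ α j' * (((j'.1 i0 : ℤ) : ℝ) * ((y i0 : ℤ):ℝ)) :=
              mul_nonneg (hα.1 j') this
          _ = α j' * ((j'.1 i0:ℤ):ℝ) * ((y i0:ℤ):ℝ) := by ring)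
      (hα.2 i0) (Finset.mem_univ j)
      (fun h0 => by exact absurd (by exact_mod_cast h0) hynz)
    have habs := halign.2
    rw [abs_mul, abs_of_nonneg (hα.1 j)] at habs
    have h1 : (1:ℝ) ≤ |((j.1 i0 : ℤ) : ℝ)| := by
      have := Int.one_le_abs hi0'
      calc (1:ℝ) = ((1:ℤ):ℝ) := by norm_num
        _ ≤ ((|j.1 i0| : ℤ) : ℝ) := by exact_mod_cast this
        _ = |((j.1 i0 : ℤ) : ℝ)| := by push_cast; ring
    have h2 : α j ≤ α j * |((j.1 i0:ℤ):ℝ)| := le_mul_of_one_le_right (hα.1 j) h1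
    have h3 : |((y i0 : ℤ):ℝ)| ≤ R := by
      rw [hR]
      exact Finset.single_le_sum (f := fun i => |((y i : ℤ) : ℝ)|)
        (fun i _ => abs_nonneg _) (Finset.mem_univ i0)
    linarith
  -- closed
  have hKclosed : IsClosed K := by
    have : K = (⋂ j, {α : {g // g ∈ Gs} → ℝ | 0 ≤ α j}) ∩
        ⋂ i, {α | ∑ j, α j * ((j.1 i : ℤ) : ℝ) = ((y i : ℤ) : ℝ)} := by
      ext α; simp [hK, Set.mem_iInter, forall_and]
    rw [this]
    exact (isClosed_iInter fun j => isClosed_le continuous_const (continuous_apply j)).inter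
      (isClosed_iInter fun i => isClosed_eq
        (continuous_finset_sum _ fun j _ => (continuous_apply j).mul continuous_const)
        continuous_const)
  -- compact
  have hKcomp : IsCompact K := by
    apply (isCompact_closedBall (0 : {g // g ∈ Gs} → ℝ) R).of_isClosed_subset hKclosed
    intro α hα
    rw [Metric.mem_closedBall, dist_zero_right]
    rw [pi_norm_le_iff_of_nonneg hR0]
    intro j
    rw [Real.norm_eq_abs, abs_of_nonneg (hα.1 j)]
    exact hbd α hα j
  -- maximize
  obtain ⟨αm, hαmK, hmax⟩ := hKcomp.exists_isMaxOn hKne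
    ((continuous_finset_sum Finset.univ fun j _ => continuous_apply j).continuousOn
      (f := fun α : {g // g ∈ Gs} → ℝ => ∑ j, α j))
  set V : ℝ := ∑ j, αm j with hV
  set F : Set ({g // g ∈ Gs} → ℝ) := K ∩ {α | ∑ j, α j = V} with hF
  have hFcomp : IsCompact F := hKcomp.inter_right
    (isClosed_eq (continuous_finset_sum Finset.univ fun j _ => continuous_apply j)
      continuous_const)
  have hFne : F.Nonempty := ⟨αm, hαmK, rfl⟩
  have hExt : IsExtreme ℝ K F := by
    constructor
    · exact Set.inter_subset_left
    · rintro x1 hx1 x2 hx2 x ⟨hxK, hxV⟩ hseg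
      obtain ⟨a, b, ha, hb, hab, hx⟩ := hseg
      have h1 : ∑ j, x1 j ≤ V := hmax hx1
      have h2 : ∑ j, x2 j ≤ V := hmax hx2
      have hcomb : a * (∑ j, x1 j) + b * (∑ j, x2 j) = V := by
        have : ∑ j, (a • x1 + b • x2) j = V := by rw [hx]; exact hxV
        simpa [Finset.sum_add_distrib, Finset.mul_sum] using this
      have haV : a * V + b * V = V := by rw [← add_mul, hab, one_mul]
      have hx1V : ∑ j, x1 j = V := by
        by_contra hne
        have hlt : ∑ j, x1 j < V := lt_of_le_of_ne h1 hne
        linarith [mul_lt_mul_of_pos_left hlt ha, mul_le_mul_of_nonneg_left h2 hb.le]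
      have hx2V : ∑ j, x2 j = V := by
        by_contra hne
        have hlt : ∑ j, x2 j < V := lt_of_le_of_ne h2 hne
        linarith [mul_lt_mul_of_pos_left hlt hb, mul_le_mul_of_nonneg_left h1 ha.le]
      exact ⟨hx1, hx1V⟩
  obtain ⟨α, hαF⟩ := hFcomp.extremePoints_nonempty hFne
  have hαK : α ∈ K.extremePoints ℝ := hExt.extremePoints_subset_extremePoints hαF
  have hαmem : α ∈ K := hαK.1
  have hαV : ∑ j, α j = V := (extremePoints_subset hαF).2
  -- support
  set supp : Finset {g // g ∈ Gs} := Finset.univ.filter (fun j => α j ≠ 0) with hsupp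
  have hsuppcard : supp.card ≤ n := by
    have hLI : LinearIndependent ℝ (fun j : {x // x ∈ supp} => (fun i => ((j.1.1 i : ℤ) : ℝ))) := by
      by_contra hdep
      obtain ⟨cc, hccsum, j0, hj0⟩ := Fintype.not_linearIndependent_iff.mp hdep
      set d : {g // g ∈ Gs} → ℝ := fun j => if h : j ∈ supp then cc ⟨j, h⟩ else 0 with hd
      have hdsum : ∀ i, ∑ j, d j * ((j.1 i : ℤ) : ℝ) = 0 := by
        intro i
        have h1 : ∑ j ∈ supp, d j * ((j.1 i:ℤ):ℝ) = ∑ j, d j * ((j.1 i:ℤ):ℝ) :=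
          Finset.sum_subset (Finset.subset_univ _)
            (fun x _ hx => by simp [hd, hx])
        rw [← h1, ← Finset.sum_coe_sort supp (fun j => d j * ((j.1 i : ℤ) : ℝ))]
        have h2 := congrFun hccsum i
        simp only [Finset.sum_apply, Pi.smul_apply, smul_eq_mul, Pi.zero_apply] at h2
        rw [← h2]
        apply Finset.sum_congr rfl
        intro jj _
        simp [hd, jj.2]
      have hj0supp : (j0 : {g // g ∈ Gs}) ∈ supp := j0.2
      have hsuppne : supp.Nonempty := ⟨j0.1, j0.2⟩
      set ε : ℝ := supp.inf' hsuppne (fun j => α j / (|d j| + 1)) with hε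
      have hεpos : 0 < ε := by
        rw [hε, Finset.lt_inf'_iff]
        intro j hj
        have hαj : 0 < α j := lt_of_le_of_ne (hαmem.1 j)
          (Ne.symm (by simpa [hsupp] using hj))
        positivity
      have hkey : ∀ j, ε * |d j| ≤ α j ∨ (α j = 0 ∧ d j = 0) := by
        intro j
        by_cases hjs : j ∈ supp
        · left
          have hle : ε ≤ α j / (|d j| + 1) := Finset.inf'_le _ hjs
          have hpos : (0:ℝ) < |d j| + 1 := by positivity
          have := (le_div_iff₀ hpos).mp hle
          nlinarith [hεpos]
        · right
          constructor
          · by_contra h; exact hjs (by simp [hsupp, h])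
          · simp [hd, hjs]
      have hmempm : ∀ (s : ℝ), |s| ≤ ε → (α + s • d) ∈ K := by
        intro s hs
        constructor
        · intro j
          rcases hkey j with h | ⟨h1, h2⟩
          · have : |s * d j| ≤ ε * |d j| := by
              rw [abs_mul]
              exact mul_le_mul_of_nonneg_right hs (abs_nonneg _)
            have h2 := neg_abs_le (s * d j)
            simp only [Pi.add_apply, Pi.smul_apply, smul_eq_mul]
            linarith
          · simp [h1, h2]
        · intro i
          have : ∑ j, (α j + s * d j) * ((j.1 i:ℤ):ℝ)
              = ∑ j, α j * ((j.1 i:ℤ):ℝ) + s * ∑ j, d j * ((j.1 i:ℤ):ℝ) := by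
            rw [Finset.mul_sum, ← Finset.sum_add_distrib]
            apply Finset.sum_congr rfl; intro j _; ring
          simp only [Pi.add_apply, Pi.smul_apply, smul_eq_mul]
          rw [this, hdsum i, hαmem.2 i]; ring
      have hplus : (α + ε • d) ∈ K := hmempm ε (by rw [abs_of_pos hεpos])
      have hminus : (α + (-ε) • d) ∈ K := hmempm (-ε) (by rw [abs_neg, abs_of_pos hεpos])
      have hseg : α ∈ openSegment ℝ (α + (-ε) • d) (α + ε • d) := by
        refine ⟨1/2, 1/2, by norm_num, by norm_num, by norm_num, ?_⟩
        funext j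
        simp only [Pi.add_apply, Pi.smul_apply, smul_eq_mul]
        ring
      have := hαK.2 hminus hplus hseg
      have hd0 : d j0.1 = 0 := by
        have heq : ε * d j0.1 = 0 := by
          have := congrFun this j0.1
          simp only [Pi.add_apply, Pi.smul_apply, smul_eq_mul] at this
          linarith
        rcases mul_eq_zero.mp heq with h | h
        · exact absurd h (ne_of_gt hεpos)
        · exact h
      apply hj0
      have : d j0.1 = cc j0 := by
        rw [hd]; simp only [dif_pos j0.2]
      rw [← this]; exact hd0
    have hcard := hLI.fintype_card_le_finrank
    rw [Module.finrank_pi ℝ] at hcard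
    simpa [Fintype.card_coe] using hcard
  -- flooring
  set P : Fin n → ℤ := fun i => ∑ j : {g // g ∈ Gs}, ⌊α j⌋ * j.1 i with hP
  have hfl0 : ∀ j : {g // g ∈ Gs}, (0:ℤ) ≤ ⌊α j⌋ := fun j => Int.floor_nonneg.mpr (hαmem.1 j)
  have hPbtw : ∀ i, (0 ≤ P i ∧ P i ≤ y i) ∨ (y i ≤ P i ∧ P i ≤ 0) := by
    intro i
    rcases lt_trichotomy (y i) 0 with hyi | hyi | hyi
    · right
      have hgle : ∀ j : {g // g ∈ Gs}, j.1 i ≤ 0 := by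
        intro j; nlinarith [(hgconf j i).1]
      constructor
      · -- y i ≤ P i  via reals
        have hr : (y i : ℝ) ≤ (P i : ℝ) := by
          have h1 : ((P i : ℤ) : ℝ) = ∑ j : {g // g ∈ Gs}, ((⌊α j⌋ : ℝ) * ((j.1 i : ℤ) : ℝ)) := by
            have : P i = ∑ j : {g // g ∈ Gs}, ⌊α j⌋ * j.1 i := rfl
            rw [this]; push_cast; ring
          rw [h1, ← hαmem.2 i]
          apply Finset.sum_le_sum
          intro j _
          have hj : ((j.1 i : ℤ) : ℝ) ≤ 0 := by exact_mod_cast hgle j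
          have := Int.floor_le (α j)
          nlinarith [hαmem.1 j, hfl0 j]
        exact_mod_cast hr
      · rw [hP]
        apply Finset.sum_nonpos
        intro j _
        exact mul_nonpos_of_nonneg_of_nonpos (hfl0 j) (hgle j)
    · left
      have : P i = 0 := by
        rw [hP]; apply Finset.sum_eq_zero
        intro j _; rw [hgzero j i hyi, mul_zero]
      rw [this, hyi]; exact ⟨le_rfl, le_rfl⟩
    · left
      have hgle : ∀ j : {g // g ∈ Gs}, 0 ≤ j.1 i := by
        intro j; nlinarith [(hgconf j i).1]
      constructor
      · rw [hP]
        apply Finset.sum_nonneg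
        intro j _
        exact mul_nonneg (hfl0 j) (hgle j)
      · have hr : (P i : ℝ) ≤ (y i : ℝ) := by
          have h1 : ((P i : ℤ) : ℝ) = ∑ j : {g // g ∈ Gs}, ((⌊α j⌋ : ℝ) * ((j.1 i : ℤ) : ℝ)) := by
            have : P i = ∑ j : {g // g ∈ Gs}, ⌊α j⌋ * j.1 i := rfl
            rw [this]; push_cast; ring
          rw [h1, ← hαmem.2 i]
          apply Finset.sum_le_sum
          intro j _
          have hj : (0:ℝ) ≤ ((j.1 i : ℤ) : ℝ) := by exact_mod_cast hgle j
          have := Int.floor_le (α j)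
          nlinarith
        exact_mod_cast hr
  have hPconf : Conf y P := by
    intro i
    rcases hPbtw i with ⟨h1, h2⟩ | ⟨h1, h2⟩
    · constructor
      · nlinarith
      · rw [abs_of_nonneg h1, abs_of_nonneg (le_trans h1 h2)]; exact h2
    · constructor
      · nlinarith
      · rw [abs_of_nonpos h2, abs_of_nonpos (le_trans h1 h2)]; linarith
  set r : Fin n → ℤ := fun i => y i - P i with hr
  have hrconf : Conf y r := conf_sub hPconf
  have hrcyc : IsCycle A r := by
    have hPvec : P = ∑ j : {g // g ∈ Gs}, ⌊α j⌋ • (j.1 : Fin n → ℤ) := by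
      funext i
      rw [hP, Finset.sum_apply]
      apply Finset.sum_congr rfl
      intro j _; simp [smul_eq_mul]
    have hrvec : r = y - P := by funext i; simp [hr]
    unfold IsCycle
    rw [hrvec, ← Matrix.mulVecLin_apply, map_sub, Matrix.mulVecLin_apply, Matrix.mulVecLin_apply,
      hcyc, hPvec]
    have : A.mulVec (∑ j : {g // g ∈ Gs}, ⌊α j⌋ • (j.1 : Fin n → ℤ)) = 0 := by
      rw [← Matrix.mulVecLin_apply, map_sum]
      apply Finset.sum_eq_zero
      intro j _
      rw [map_smul, Matrix.mulVecLin_apply, (hggrav j).1]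
      simp
    rw [this]; simp
  -- residual decomposition counts
  obtain ⟨cnt, hcntsum, hcnttot⟩ : ∃ cnt : {g // g ∈ Gs} → ℕ,
      (∀ i, ∑ j, (cnt j : ℤ) * j.1 i = r i) ∧ ((∑ j, cnt j : ℕ) : ℝ) ≤ (n : ℝ) := by
    by_cases hr0 : r = 0
    · refine ⟨fun _ => 0, fun i => ?_, by simp⟩
      have h0 : r i = 0 := by rw [hr0]; rfl
      simp [h0]
    · obtain ⟨Lr, hLrne, hLrmem, hLrsum⟩ := exists_decomp A _ r le_rfl hrcyc hr0
      have hsubr : ∀ g ∈ (↑Lr : Multiset (Fin n → ℤ)), g ∈ Gs := by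
        intro g hg
        have hmemr := hLrmem g (by simpa using hg)
        exact (hmem g).mpr ⟨hmemr.1, conf_trans hrconf hmemr.2⟩
      refine ⟨fun j => (↑Lr : Multiset (Fin n → ℤ)).count j.1, ?_, ?_⟩
      · intro i
        have hz := count_decomp Gs (↑Lr : Multiset (Fin n → ℤ)) hsubr i
        have hs : (↑Lr : Multiset (Fin n → ℤ)).sum = r := by simpa using hLrsum
        rw [hs] at hz; exact hz
      · -- optimality bound
        set γ : {g // g ∈ Gs} → ℝ :=
          fun j => (⌊α j⌋ : ℝ) + ((↑Lr : Multiset (Fin n → ℤ)).count j.1 : ℝ) with hγ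
        have hγK : γ ∈ K := by
          constructor
          · intro j
            have := hfl0 j
            have h2 : (0:ℝ) ≤ (⌊α j⌋ : ℝ) := by exact_mod_cast this
            positivity
          · intro i
            have hz := count_decomp Gs (↑Lr : Multiset (Fin n → ℤ)) hsubr i
            have hs : (↑Lr : Multiset (Fin n → ℤ)).sum = r := by simpa using hLrsum
            rw [hs] at hz
            have hP2 : ∑ j : {g // g ∈ Gs}, (⌊α j⌋ : ℝ) * ((j.1 i : ℤ):ℝ) = ((P i : ℤ) : ℝ) := by
              have : P i = ∑ j : {g // g ∈ Gs}, ⌊α j⌋ * j.1 i := rfl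
              rw [this]; push_cast; ring
            have hr2 : ∑ j : {g // g ∈ Gs}, (((↑Lr : Multiset (Fin n → ℤ)).count j.1 : ℤ):ℝ)
                * ((j.1 i : ℤ):ℝ) = ((r i : ℤ) : ℝ) := by
              rw [← hz]; push_cast; ring
            calc ∑ j, γ j * ((j.1 i : ℤ):ℝ)
                = ∑ j : {g // g ∈ Gs}, ((⌊α j⌋ : ℝ) * ((j.1 i:ℤ):ℝ)
                    + (((↑Lr : Multiset (Fin n → ℤ)).count j.1 : ℤ):ℝ) * ((j.1 i:ℤ):ℝ)) := by
                  apply Finset.sum_congr rfl; intro j _; rw [hγ]; push_cast; ring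
              _ = ((P i : ℤ):ℝ) + ((r i : ℤ):ℝ) := by
                  rw [Finset.sum_add_distrib, hP2, hr2]
              _ = ((y i : ℤ):ℝ) := by rw [hr]; push_cast; ring
        have hopt : ∑ j, γ j ≤ V := hmax hγK
        have hsplit : ∑ j, γ j = (∑ j, (⌊α j⌋:ℝ)) + ∑ j : {g // g ∈ Gs}, (((↑Lr : Multiset (Fin n → ℤ)).count j.1 : ℕ):ℝ) := by
          rw [← Finset.sum_add_distrib]
        have hfrac : ∑ j, (α j - (⌊α j⌋:ℝ)) ≤ (supp.card : ℝ) := by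
          have h1 : ∑ j, (α j - (⌊α j⌋:ℝ)) = ∑ j ∈ supp, (α j - (⌊α j⌋:ℝ)) := by
            symm
            apply Finset.sum_subset (Finset.subset_univ _)
            intro j _ hj
            have : α j = 0 := by
              by_contra h; exact hj (by simp [hsupp, h])
            simp [this]
          rw [h1]
          have h2 : ∑ j ∈ supp, (α j - (⌊α j⌋:ℝ)) ≤ ∑ _j ∈ supp, (1:ℝ) := by
            apply Finset.sum_le_sum
            intro j _
            have := Int.sub_one_lt_floor (α j)
            linarith
          simpa using h2
        have : ((∑ j : {g // g ∈ Gs}, (↑Lr : Multiset (Fin n → ℤ)).count j.1 : ℕ) : ℝ)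
            ≤ (supp.card : ℝ) := by
          push_cast
          have hVα : V = ∑ j, α j := hαV.symm
          rw [hVα] at hopt
          rw [hsplit] at hopt
          push_cast at hopt ⊢
          have := hfrac
          rw [Finset.sum_sub_distrib] at this
          linarith
        calc ((∑ j : {g // g ∈ Gs}, (↑Lr : Multiset (Fin n → ℤ)).count j.1 : ℕ) : ℝ)
            ≤ (supp.card : ℝ) := this
          _ ≤ (n : ℝ) := by exact_mod_cast hsuppcard
  -- final assembly
  set D' : {g // g ∈ Gs} → ℕ := fun j => ⌊α j⌋.toNat + cnt j with hD'
  have hD'sum : ∀ i, ∑ j, (D' j : ℤ) * j.1 i = y i := by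
    intro i
    have h1 : ∀ j : {g // g ∈ Gs}, (D' j : ℤ) = ⌊α j⌋ + (cnt j : ℤ) := by
      intro j
      rw [hD']
      push_cast [Int.toNat_of_nonneg (hfl0 j)]
      ring
    calc ∑ j, (D' j : ℤ) * j.1 i = ∑ j, (⌊α j⌋ * j.1 i + (cnt j : ℤ) * j.1 i) := by
          apply Finset.sum_congr rfl; intro j _; rw [h1 j]; ring
      _ = P i + r i := by
          have hPi : P i = ∑ j : {g // g ∈ Gs}, ⌊α j⌋ * j.1 i := rfl
          rw [Finset.sum_add_distrib, ← hPi, hcntsum i]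
      _ = y i := by rw [hr]; ring
  set suppD : Finset {g // g ∈ Gs} := Finset.univ.filter (fun j => D' j ≠ 0) with hsuppD
  have hcardD : suppD.card ≤ 2 * n := by
    have hsplit : suppD ⊆ (Finset.univ.filter (fun j => ⌊α j⌋.toNat ≠ 0)) ∪
        (Finset.univ.filter (fun j => cnt j ≠ 0)) := by
      intro j hj
      rw [hsuppD, Finset.mem_filter] at hj
      rw [Finset.mem_union, Finset.mem_filter, Finset.mem_filter]
      have : ⌊α j⌋.toNat ≠ 0 ∨ cnt j ≠ 0 := by
        by_contra h
        push_neg at h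
        exact hj.2 (by
          have hDj : D' j = ⌊α j⌋.toNat + cnt j := rfl
          omega)
      rcases this with h | h
      · exact Or.inl ⟨Finset.mem_univ j, h⟩
      · exact Or.inr ⟨Finset.mem_univ j, h⟩
    have hA : (Finset.univ.filter (fun j : {g // g ∈ Gs} => ⌊α j⌋.toNat ≠ 0)).card ≤ n := by
      have hsub2 : (Finset.univ.filter (fun j : {g // g ∈ Gs} => ⌊α j⌋.toNat ≠ 0)) ⊆ supp := by
        intro j hj
        rw [Finset.mem_filter] at hj
        rw [hsupp, Finset.mem_filter]
        refine ⟨Finset.mem_univ j, ?_⟩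
        intro hc
        apply hj.2
        rw [hc]
        simp
      exact (Finset.card_le_card hsub2).trans hsuppcard
    have hB : (Finset.univ.filter (fun j : {g // g ∈ Gs} => cnt j ≠ 0)).card ≤ n := by
      have h1 : (Finset.univ.filter (fun j : {g // g ∈ Gs} => cnt j ≠ 0)).card
          ≤ ∑ j, cnt j := by
        calc (Finset.univ.filter (fun j : {g // g ∈ Gs} => cnt j ≠ 0)).card
            = ∑ j ∈ Finset.univ.filter (fun j : {g // g ∈ Gs} => cnt j ≠ 0), 1 := by
              rw [Finset.sum_const, smul_eq_mul, mul_one]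
          _ ≤ ∑ j ∈ Finset.univ.filter (fun j : {g // g ∈ Gs} => cnt j ≠ 0), cnt j := by
              apply Finset.sum_le_sum
              intro j hj
              rw [Finset.mem_filter] at hj
              omega
          _ ≤ ∑ j, cnt j := Finset.sum_le_sum_of_subset (Finset.filter_subset _ _)
      have h2 : ∑ j, cnt j ≤ n := by exact_mod_cast hcnttot
      omega
    calc suppD.card ≤ _ := Finset.card_le_card hsplit
      _ ≤ _ + _ := Finset.card_union_le _ _
      _ ≤ 2 * n := by omega
  set k : ℕ := suppD.card with hk
  set e : {x // x ∈ suppD} ≃ Fin k := suppD.equivFin with he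
  refine ⟨k, fun t => ((e.symm t).1).1, fun t => D' (e.symm t).1, hcardD, ?_, ?_⟩
  · intro t
    refine ⟨hggrav _, hgconf _, ?_⟩
    have hne0 : D' ((e.symm t) : {g // g ∈ Gs}) ≠ 0 := (Finset.mem_filter.mp (e.symm t).2).2
    show 1 ≤ D' ((e.symm t) : {g // g ∈ Gs})
    omega
  · intro i
    have h1 : ∑ t : Fin k, (D' (e.symm t).1 : ℤ) * ((e.symm t).1).1 i
        = ∑ jj : {x // x ∈ suppD}, (D' jj.1 : ℤ) * (jj.1).1 i :=
      Equiv.sum_comp e.symm (fun jj => (D' jj.1 : ℤ) * (jj.1).1 i)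
    rw [h1, Finset.sum_coe_sort suppD (fun j => (D' j : ℤ) * j.1 i)]
    have h2 : ∑ j ∈ suppD, (D' j : ℤ) * j.1 i = ∑ j, (D' j : ℤ) * j.1 i := by
      apply Finset.sum_subset (Finset.subset_univ _)
      intro j _ hj
      rw [hsuppD, Finset.mem_filter] at hj
      push_neg at hj
      have : D' j = 0 := hj (Finset.mem_univ j)
      rw [this]
      simp
    rw [h2, hD'sum i]

end GraverAux

open GraverAux

/-- For feasible solutions `z₀, z*` with `cᵀz* > cᵀz₀`, there are a Graver basis
element `g` of `A` and a positive integer `λ` such that `z₀ + λg` is feasible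
and `λ · cᵀg ≥ cᵀ(z* − z₀)/(4n)`, where `λ` is a power of two. -/
theorem augmenting_graver_step_pow_two (m n : ℕ)
    (A : Matrix (Fin m) (Fin n) ℤ) (b : Fin m → ℤ) (c : Fin n → ℤ)
    (l u : Fin n → ZInf)
    (z0 zs : Fin n → ℤ)
    (hz0 : IsFeasible A b l u z0) (hzs : IsFeasible A b l u zs)
    (hlt : ∑ i, c i * z0 i < ∑ i, c i * zs i) :
    ∃ (g : Fin n → ℤ) (lam : ℕ), InGraverBasis A g ∧ 0 < lam ∧
      (∃ i : ℕ, lam = 2 ^ i) ∧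
      IsFeasible A b l u (z0 + (lam : ℤ) • g) ∧
      ((∑ i, c i * (zs i - z0 i) : ℤ) : ℚ) / (4 * (n : ℚ)) ≤
        (lam : ℚ) * ((∑ i, c i * g i : ℤ) : ℚ) := by
  classical
  have hn : 0 < n := by
    by_contra hn
    push_neg at hn
    have hn0 : n = 0 := by omega
    subst hn0
    simp at hlt
  set y : Fin n → ℤ := zs - z0 with hy
  have hyi : ∀ i, y i = zs i - z0 i := fun i => rfl
  have hycyc : IsCycle A y := by
    unfold IsCycle
    rw [hy, ← Matrix.mulVecLin_apply, map_sub, Matrix.mulVecLin_apply, Matrix.mulVecLin_apply,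
      hz0.1, hzs.1]
    simp
  have hyne : y ≠ 0 := by
    intro h0
    have heq : ∀ i, zs i = z0 i := by
      intro i
      have := congrFun h0 i
      rw [hyi i] at this
      simp at this
      linarith
    have : ∑ i, c i * z0 i = ∑ i, c i * zs i :=
      Finset.sum_congr rfl (fun i _ => by rw [heq i])
    omega
  obtain ⟨k, G, D, hk2n, hprops, hsum⟩ := GraverAux.key A y hycyc hyne
  set S : ℤ := ∑ i, c i * y i with hS
  have hSpos : 0 < S := by
    have h1 : S = ∑ i, c i * zs i - ∑ i, c i * z0 i := by
      rw [hS, ← Finset.sum_sub_distrib]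
      apply Finset.sum_congr rfl
      intro i _
      rw [hyi i]; ring
    omega
  have hterm : ∑ t : Fin k, (D t : ℤ) * (∑ i, c i * G t i) = S := by
    rw [hS]
    calc ∑ t : Fin k, (D t:ℤ) * ∑ i, c i * G t i
        = ∑ t : Fin k, ∑ i, c i * ((D t:ℤ) * G t i) := by
          apply Finset.sum_congr rfl
          intro t _
          rw [Finset.mul_sum]
          apply Finset.sum_congr rfl
          intro i _; ring
      _ = ∑ i, ∑ t : Fin k, c i * ((D t:ℤ) * G t i) := Finset.sum_comm
      _ = ∑ i, c i * y i := by
          apply Finset.sum_congr rfl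
          intro i _
          rw [← Finset.mul_sum, hsum i]
  have hkpos : 0 < k := by
    rcases Nat.eq_zero_or_pos k with h | h
    · exfalso
      subst h
      simp at hterm
      omega
    · exact h
  have hex : ∃ t : Fin k, S ≤ (k:ℤ) * ((D t : ℤ) * ∑ i, c i * G t i) := by
    have hne : (Finset.univ : Finset (Fin k)).Nonempty := by
      refine ⟨⟨0, hkpos⟩, Finset.mem_univ _⟩
    have hsums : ∑ _t : Fin k, S ≤ ∑ t : Fin k, (k:ℤ) * ((D t : ℤ) * ∑ i, c i * G t i) := by
      rw [← Finset.mul_sum, hterm, Finset.sum_const]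
      simp [mul_comm]
    obtain ⟨t, _, ht⟩ := Finset.exists_le_of_sum_le hne hsums
    exact ⟨t, ht⟩
  obtain ⟨t, ht⟩ := hex
  set g : Fin n → ℤ := G t with hg
  set β : ℕ := D t with hβ
  set cg : ℤ := ∑ i, c i * g i with hcg
  have hβ1 : 1 ≤ β := (hprops t).2.2
  have hβp : (0:ℤ) < (β:ℤ) := by exact_mod_cast hβ1
  have hcgpos : 0 < cg := by
    have h1 : 0 < (k:ℤ) * ((β:ℤ) * cg) := lt_of_lt_of_le hSpos ht
    have hk0 : (0:ℤ) ≤ (k:ℤ) := by positivity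
    by_contra hc
    push_neg at hc
    have h2 : (β:ℤ) * cg ≤ 0 := mul_nonpos_of_nonneg_of_nonpos hβp.le hc
    have h3 : (k:ℤ) * ((β:ℤ) * cg) ≤ 0 := mul_nonpos_of_nonneg_of_nonpos hk0 h2
    linarith
  set lam : ℕ := 2 ^ (Nat.log 2 β) with hlam
  have hlam1 : 1 ≤ lam := Nat.one_le_two_pow
  have hlamle : lam ≤ β := Nat.pow_log_le_self 2 (by omega)
  have hβlt : β < 2 * lam := by
    have := Nat.lt_pow_succ_log_self (by norm_num : 1 < 2) β
    rw [pow_succ] at this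
    omega
  refine ⟨g, lam, (hprops t).1, by omega, ⟨Nat.log 2 β, rfl⟩, ?_, ?_⟩
  · constructor
    · rw [← Matrix.mulVecLin_apply, map_add, map_smul, Matrix.mulVecLin_apply,
        Matrix.mulVecLin_apply, hz0.1, (hprops t).1.1]
      simp
    · intro j
      have halign := aligned_term_bound (Finset.univ : Finset (Fin k))
        (fun t' => (D t':ℤ) * G t' j) (y j)
        (fun t' _ => by
          have h1 := ((hprops t').2.1 j).1
          have h2 : (0:ℤ) ≤ (D t' : ℤ) := by positivity
          calc (0:ℤ) ≤ (D t':ℤ) * (G t' j * y j) := mul_nonneg h2 h1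
            _ = (D t':ℤ) * G t' j * y j := by ring)
        (hsum j) (Finset.mem_univ t)
        (fun h0 => by
          have hth := ((hprops t).2.1 j).2
          rw [h0] at hth
          simp at hth
          show (D t : ℤ) * G t j = 0
          rw [hth]; ring)
      have ha1 : 0 ≤ ((β:ℤ) * g j) * y j := halign.1
      have ha2 : |(β:ℤ) * g j| ≤ |y j| := halign.2
      have hstep := step_between ha1 ha2 hβ1 hlam1 hlamle
        (fun h0 => by
          have hth := ((hprops t).2.1 j).2
          rw [h0] at hth
          simpa using hth)
      have happ : (z0 + (lam:ℤ) • g) j = z0 j + (lam:ℤ) * g j := by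
        simp [smul_eq_mul]
      rcases hstep with ⟨h1, h2⟩ | ⟨h1, h2⟩
      · have hx1 : z0 j ≤ z0 j + (lam:ℤ) * g j := by linarith
        have hx2 : z0 j + (lam:ℤ) * g j ≤ zs j := by
          have := hyi j; linarith
        rw [happ]
        exact ⟨le_trans (hz0.2 j).1 (zc_mono hx1), le_trans (zc_mono hx2) (hzs.2 j).2⟩
      · have hx1 : zs j ≤ z0 j + (lam:ℤ) * g j := by
          have := hyi j; linarith
        have hx2 : z0 j + (lam:ℤ) * g j ≤ z0 j := by linarith
        rw [happ]
        exact ⟨le_trans (hzs.2 j).1 (zc_mono hx1), le_trans (zc_mono hx2) (hz0.2 j).2⟩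
  · have hSeq : (∑ i, c i * (zs i - z0 i)) = S := by
      rw [hS]
      apply Finset.sum_congr rfl
      intro i _
      rw [hyi i]
    rw [hSeq]
    have hk2n' : (k:ℤ) ≤ 2 * n := by exact_mod_cast hk2n
    have hβ2 : (β:ℤ) ≤ 2 * lam := by exact_mod_cast hβlt.le
    have hlamp : (0:ℤ) < (lam:ℤ) := by exact_mod_cast hlam1
    have hZ : S ≤ 4 * (n:ℤ) * (lam:ℤ) * cg := by
      have e1 : (k:ℤ) * ((β:ℤ) * cg) ≤ (2 * n) * ((β:ℤ) * cg) :=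
        mul_le_mul_of_nonneg_right hk2n' (by positivity)
      have e2 : (β:ℤ) * cg ≤ (2 * (lam:ℤ)) * cg :=
        mul_le_mul_of_nonneg_right hβ2 hcgpos.le
      have e3 : (2 * (n:ℤ)) * ((β:ℤ) * cg) ≤ (2 * n) * ((2 * (lam:ℤ)) * cg) :=
        mul_le_mul_of_nonneg_left e2 (by positivity)
      calc S ≤ (k:ℤ) * ((β:ℤ) * cg) := ht
        _ ≤ (2 * n) * ((β:ℤ) * cg) := e1
        _ ≤ (2 * n) * ((2 * (lam:ℤ)) * cg) := e3
        _ = 4 * (n:ℤ) * (lam:ℤ) * cg := by ring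
    rw [div_le_iff₀ (by positivity : (0:ℚ) < 4 * (n:ℚ))]
    have hQ : ((S:ℤ):ℚ) ≤ ((4 * (n:ℤ) * (lam:ℤ) * cg : ℤ):ℚ) := by exact_mod_cast hZ
    push_cast at hQ ⊢
    rw [hcg] at hQ
    push_cast at hQ
    nlinarith [hQ]
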